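/- With V = (W + c·(tr W)·I_p)⁻¹, one has p²/(1 + c p) ≤ tr(V)·tr(W) ≤ p/c. -/

import Mathlib

open Matrix

variable {p : ℕ}

lemma trace_eq_sum_eig (A : Matrix (Fin p) (Fin p) ℝ) (hA : A.IsHermitian) :
    A.trace = ∑ i, hA.eigenvalues i := by
  have hU1 : star (hA.eigenvectorUnitary : Matrix (Fin p) (Fin p) ℝ) *
      (hA.eigenvectorUnitary : Matrix (Fin p) (Fin p) ℝ) = 1 :=
    (Matrix.mem_unitaryGroup_iff').mp (hA.eigenvectorUnitary).2
  conv_lhs => rw [hA.spectral_theorem]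
  rw [Unitary.conjStarAlgAut_apply, Matrix.trace_mul_cycle, hU1, one_mul, Matrix.trace_diagonal]
  simp

lemma inv_spectral (A : Matrix (Fin p) (Fin p) ℝ) (hA : A.PosDef) :
    A⁻¹ = (hA.1.eigenvectorUnitary : Matrix (Fin p) (Fin p) ℝ) *
      diagonal (fun i => (hA.1.eigenvalues i)⁻¹) *
      star (hA.1.eigenvectorUnitary : Matrix (Fin p) (Fin p) ℝ) := by
  set U : Matrix (Fin p) (Fin p) ℝ := (hA.1.eigenvectorUnitary : Matrix (Fin p) (Fin p) ℝ)
  have hU1 : star U * U = 1 := (Matrix.mem_unitaryGroup_iff').mp (hA.1.eigenvectorUnitary).2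
  have hU2 : U * star U = 1 := (Matrix.mem_unitaryGroup_iff).mp (hA.1.eigenvectorUnitary).2
  apply Matrix.inv_eq_right_inv
  nth_rewrite 1 [hA.1.spectral_theorem]
  have hD : diagonal (RCLike.ofReal ∘ hA.1.eigenvalues) *
      diagonal (fun i => (hA.1.eigenvalues i)⁻¹) = (1 : Matrix (Fin p) (Fin p) ℝ) := by
    rw [Matrix.diagonal_mul_diagonal]
    have : (fun i => (RCLike.ofReal ∘ hA.1.eigenvalues) i * (hA.1.eigenvalues i)⁻¹) =
        fun _ => (1 : ℝ) := funext fun i => by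
      simp only [Function.comp_apply, RCLike.ofReal_real_eq_id, id_eq]
      exact mul_inv_cancel₀ (hA.eigenvalues_pos i).ne'
    rw [this, Matrix.diagonal_one]
  calc U * diagonal (RCLike.ofReal ∘ hA.1.eigenvalues) * star U *
        (U * diagonal (fun i => (hA.1.eigenvalues i)⁻¹) * star U)
      = U * diagonal (RCLike.ofReal ∘ hA.1.eigenvalues) * (star U * U) *
        diagonal (fun i => (hA.1.eigenvalues i)⁻¹) * star U := by
        simp only [Matrix.mul_assoc]
    _ = 1 := by
        rw [hU1, Matrix.mul_one, Matrix.mul_assoc U _ _, hD, Matrix.mul_one, hU2]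

lemma trace_inv_eq (A : Matrix (Fin p) (Fin p) ℝ) (hA : A.PosDef) :
    A⁻¹.trace = ∑ i, (hA.1.eigenvalues i)⁻¹ := by
  have hU1 : star (hA.1.eigenvectorUnitary : Matrix (Fin p) (Fin p) ℝ) *
      (hA.1.eigenvectorUnitary : Matrix (Fin p) (Fin p) ℝ) = 1 :=
    (Matrix.mem_unitaryGroup_iff').mp (hA.1.eigenvectorUnitary).2
  rw [inv_spectral A hA, Matrix.trace_mul_cycle, hU1, one_mul, Matrix.trace_diagonal]

/-- With `V = (W + c·(tr W)·I_p)⁻¹`, one has `p²/(1 + c p) ≤ tr(V)·tr(W) ≤ p/c`. -/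
theorem trace_V_trace_W_bounds (p : ℕ) (hp : 1 ≤ p) (W : Matrix (Fin p) (Fin p) ℝ)
    (hW : W.PosSemidef) (htr : 0 < W.trace) (c : ℝ) (hc : 0 < c)
    (V : Matrix (Fin p) (Fin p) ℝ) (hV : V = (W + (c * W.trace) • 1)⁻¹) :
    (p : ℝ) ^ 2 / (1 + c * p) ≤ V.trace * W.trace ∧ V.trace * W.trace ≤ p / c := by
  have hp0 : (0:ℝ) < p := by exact_mod_cast hp
  set T := W.trace with hT
  set A := W + (c*T) • 1 with hAdef
  have hA : A.PosDef := by
    refine Matrix.PosDef.posSemidef_add hW ?_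
    rw [smul_one_eq_diagonal]
    exact posDef_diagonal_iff.mpr fun _ => mul_pos hc htr
  set μ := hA.1.eigenvalues with hμ
  have hμpos : ∀ i, 0 < μ i := hA.eigenvalues_pos
  have hsum : ∑ i, μ i = T * (1 + c * ↑p) := by
    rw [← trace_eq_sum_eig A hA.1, hAdef, Matrix.trace_add, Matrix.trace_smul, Matrix.trace_one]
    simp only [smul_eq_mul, Fintype.card_fin]
    ring
  have htrV : V.trace = ∑ i, (μ i)⁻¹ := by rw [hV]; exact trace_inv_eq A hA
  -- each eigenvalue is at least c*T
  have hμge : ∀ i, c * T ≤ μ i := by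
    intro i
    set v : Fin p → ℝ := ⇑(hA.1.eigenvectorBasis i) with hv
    have hnorm : dotProduct (star v) v = 1 := by
      have h1 : ‖hA.1.eigenvectorBasis i‖ = 1 := hA.1.eigenvectorBasis.orthonormal.1 i
      have h2 : (inner ℝ (hA.1.eigenvectorBasis i) (hA.1.eigenvectorBasis i) : ℝ) =
          dotProduct (star v) v :=
          (EuclideanSpace.inner_eq_star_dotProduct _ _).trans (dotProduct_comm _ _)
      rw [← h2, real_inner_self_eq_norm_sq, h1, one_pow]
    have heig : μ i = dotProduct (star v) (A *ᵥ v) := by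
      simpa using hA.1.eigenvalues_eq i
    have hAv : A *ᵥ v = W *ᵥ v + (c*T) • v := by
      rw [hAdef, Matrix.add_mulVec, Matrix.smul_mulVec, Matrix.one_mulVec]
    have hkey : μ i = dotProduct (star v) (W *ᵥ v) + c * T := by
      rw [heig, hAv, dotProduct_add, dotProduct_smul, hnorm]
      simp
    have hWv := hW.dotProduct_mulVec_nonneg v
    rw [hkey]
    linarith
  have hcT : 0 < c * T := mul_pos hc htr
  constructor
  · -- lower bound via Cauchy-Schwarz
    have hCS : ((p : ℝ)) ^ 2 ≤ (∑ i, μ i) * ∑ i, (μ i)⁻¹ := by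
      have := Finset.sum_sq_le_sum_mul_sum_of_sq_eq_mul Finset.univ
        (r := fun _ : Fin p => (1:ℝ)) (f := μ) (g := fun i => (μ i)⁻¹)
        (fun i _ => (hμpos i).le) (fun i _ => (inv_nonneg.mpr (hμpos i).le))
        (fun i _ => by rw [mul_inv_cancel₀ (hμpos i).ne']; norm_num)
      simpa using this
    rw [hsum] at hCS
    rw [htrV, div_le_iff₀ (by positivity)]
    calc (p:ℝ)^2 ≤ T * (1 + c * ↑p) * ∑ i, (μ i)⁻¹ := hCS
      _ = (∑ i, (μ i)⁻¹) * T * (1 + c * ↑p) := by ring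
  · -- upper bound
    have hbound : ∑ i, (μ i)⁻¹ ≤ (p : ℝ) * (c*T)⁻¹ := by
      calc ∑ i, (μ i)⁻¹ ≤ ∑ _i : Fin p, (c*T)⁻¹ :=
            Finset.sum_le_sum fun i _ => inv_anti₀ hcT (hμge i)
        _ = (p : ℝ) * (c*T)⁻¹ := by simp [mul_comm]
    rw [htrV]
    calc (∑ i, (μ i)⁻¹) * T ≤ (p : ℝ) * (c*T)⁻¹ * T :=
          mul_le_mul_of_nonneg_right hbound htr.le
      _ = p / c := by field_simp
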